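/- Let α = γ_{b,r} ∧ γ_{L,R'} with 0 ≤ L ≤ b and 0 ≤ r < R' < ∞, and let β = δ_D ⊗ ((δ_τ ⊗ I_σ ⊗ γ_{0,ρ}) ∧ δ_0) with D, τ, σ ≥ 0 and r < ρ ≤ R' < ∞. Suppose θ satisfies θ ≥ D and θ ≥ D + τ − (b−L)/(R'−r), and set Y_b = ((b−L)/(R'−r))·r + b and y = (θ + (b−L)/(R'−r) − (D + τ))·ρ + σ. Then the nondecreasing lower bound of the FIFO leftover satisfies (β ⊖_θ α)↑ = δ_D ⊗ [ ((δ_{θ−D+(b−L)/(R'−r)+[Y_b−y]⁺/(ρ−r)} ⊗ I_{[y−Y_b]⁺} ⊗ γ_{0,ρ−r}) ∧ δ_0) ∧ ((δ_{θ−D} ⊗ I_0 ⊗ γ_{0,+∞}) ∧ δ_0) ], where [x]⁺ = max(x, 0). -/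

import Mathlib

open scoped ENNReal
open Classical

noncomputable section

/-- Burst-delay function `δ_T`: `0` for `t ≤ T`, `+∞` for `t > T`. -/
def bdelay (T : ℝ) : ℝ → ℝ≥0∞ := fun t => if t ≤ T then 0 else ⊤

/-- Window function `I_w`: `w` at `t = 0`, `+∞` for `t > 0` (and `0` for `t < 0`). -/
def wndw (w : ℝ≥0∞) : ℝ → ℝ≥0∞ := fun t => if t < 0 then 0 else if t = 0 then w else ⊤

/-- Token-bucket curve `γ_{b,r}`: `b + r·t` for `t > 0`, `0` for `t ≤ 0`. -/
def tbkt (b r : ℝ≥0∞) : ℝ → ℝ≥0∞ := fun t => if t ≤ 0 then 0 else b + r * ENNReal.ofReal t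

/-- Min-plus convolution `(f ⊗ g)(t) = inf_{0 ≤ u ≤ t} (f(t − u) + g(u))` for `t ≥ 0`,
extended by `0` on negative times. -/
def mconv (f g : ℝ → ℝ≥0∞) : ℝ → ℝ≥0∞ :=
  fun t => if t < 0 then 0 else ⨅ u ∈ Set.Icc (0 : ℝ) t, (f (t - u) + g u)

/-- The basic MSLC building block `(δ_τ ⊗ I_σ ⊗ γ_{0,ρ}) ∧ δ_0`. -/
def mslcStep (τ : ℝ) (σ ρ : ℝ≥0∞) : ℝ → ℝ≥0∞ :=
  mconv (mconv (bdelay τ) (wndw σ)) (tbkt 0 ρ) ⊓ bdelay 0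

/-- Horizontal deviation (delay bound):
`hdev(α, β) = sup_{t ≥ 0} inf { d ≥ 0 : α(t − d) ≤ β(t) }`. -/
def hdev (α β : ℝ → ℝ≥0∞) : ℝ≥0∞ :=
  ⨆ t ∈ Set.Ici (0 : ℝ), ⨅ d ∈ {d : ℝ | 0 ≤ d ∧ α (t - d) ≤ β t}, ENNReal.ofReal d

/-- Vertical deviation (backlog bound): `vdev(α, β) = sup_{u ≥ 0} (α(u) − β(u))`
with truncated subtraction (so `x − (+∞) = 0`). -/
def vdev (α β : ℝ → ℝ≥0∞) : ℝ≥0∞ :=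
  ⨆ u ∈ Set.Ici (0 : ℝ), (α u - β u)

/-- Min-plus deconvolution `(f ⊘ g)(t) = sup_{u ≥ 0} (f(t + u) − g(u))`. -/
def mdeconv (f g : ℝ → ℝ≥0∞) : ℝ → ℝ≥0∞ :=
  fun t => ⨆ u ∈ Set.Ici (0 : ℝ), (f (t + u) - g u)

/-- FIFO leftover `(β ⊖_θ α)(t) = [β(t) − α(t − θ)]⁺` for `t > θ`, `0` for `t ≤ θ`. -/
def leftover (β α : ℝ → ℝ≥0∞) (θ : ℝ) : ℝ → ℝ≥0∞ :=
  fun t => if t ≤ θ then 0 else β t - α (t - θ)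

/-- Nondecreasing lower bound `f↑(t) = inf_{u ≥ t} f(u)`. -/
def ndlb (f : ℝ → ℝ≥0∞) : ℝ → ℝ≥0∞ := fun t => ⨅ u ∈ Set.Ici t, f u

lemma wndw_conv (T : ℝ) (hT : 0 ≤ T) (σ : ℝ≥0∞) :
    mconv (bdelay T) (wndw σ) = fun v => if v < 0 then 0 else if v ≤ T then σ else ⊤ := by
  funext v
  simp only [mconv]
  by_cases hv : v < 0
  · simp [hv]
  · simp only [if_neg hv]
    push_neg at hv
    have h0 : (0:ℝ) ∈ Set.Icc (0:ℝ) v := ⟨le_refl _, hv⟩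
    apply le_antisymm
    · refine le_trans (biInf_le _ h0) ?_
      simp only [wndw, bdelay, sub_zero]
      by_cases hvT : v ≤ T <;> simp [hvT]
    · refine le_iInf₂ fun u hu => ?_
      rcases eq_or_lt_of_le hu.1 with h | h
      · simp only [wndw, bdelay, ← h, sub_zero]
        by_cases hvT : v ≤ T <;> simp [hvT]
      · have : wndw σ u = ⊤ := by simp [wndw, not_lt.mpr (le_of_lt h), ne_of_gt h]
        simp [this]

lemma step_tbkt_conv (T : ℝ) (hT : 0 ≤ T) (σ ρ : ℝ≥0∞) :
    mconv (fun v => if v < 0 then 0 else if v ≤ T then σ else ⊤) (tbkt 0 ρ)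
      = fun s => if s < 0 then 0 else if s ≤ T then σ else σ + ρ * ENNReal.ofReal (s - T) := by
  funext s
  simp only [mconv]
  by_cases hs : s < 0
  · simp [hs]
  · simp only [if_neg hs]
    push_neg at hs
    set u₀ : ℝ := max 0 (s - T) with hu₀
    have hu₀mem : u₀ ∈ Set.Icc (0:ℝ) s := ⟨le_max_left _ _, by
      apply max_le hs; linarith⟩
    have hterm : (fun v => if v < 0 then 0 else if v ≤ T then σ else ⊤) (s - u₀) + tbkt 0 ρ u₀
        = (if s ≤ T then σ else σ + ρ * ENNReal.ofReal (s - T)) := by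
      by_cases hsT : s ≤ T
      · have : u₀ = 0 := by simp [hu₀]; linarith
        simp [this, tbkt, hsT, not_lt.mpr hs]
      · push_neg at hsT
        have : u₀ = s - T := by simp [hu₀]; linarith
        rw [this]
        have h1 : s - (s - T) = T := by ring
        have h2 : ¬ (s - T ≤ 0) := by push_neg; linarith
        simp [tbkt, h1, h2, not_lt.mpr hT, not_le.mpr hsT, add_comm]
    apply le_antisymm
    · refine le_trans (biInf_le _ hu₀mem) (le_of_eq hterm)
    · refine le_iInf₂ fun u hu => ?_
      by_cases hc : s - u ≤ T
      · have h1 : ¬ (s - u < 0) := by push_neg; linarith [hu.2]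
        rw [if_neg h1, if_pos hc]
        have htb : tbkt 0 ρ u = ρ * ENNReal.ofReal u := by
          by_cases hu0 : u ≤ 0
          · have : u = 0 := le_antisymm hu0 hu.1
            simp [tbkt, this]
          · simp [tbkt, hu0]
        rw [htb]
        by_cases hsT : s ≤ T
        · rw [if_pos hsT]; exact le_add_right (le_refl σ)
        · rw [if_neg hsT]
          gcongr
          linarith
      · have h1 : ¬ (s - u < 0) := by push_neg; linarith [le_trans hu.1 hu.2]
        rw [if_neg h1, if_neg hc, top_add]
        exact le_top

lemma mslcStep_eq (T : ℝ) (hT : 0 ≤ T) (σ ρ : ℝ≥0∞) :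
    mslcStep T σ ρ = fun s => if s ≤ 0 then 0 else if s ≤ T then σ
      else σ + ρ * ENNReal.ofReal (s - T) := by
  have h1 := wndw_conv T hT σ
  funext s
  simp only [mslcStep, Pi.inf_apply, h1, step_tbkt_conv T hT σ ρ]
  rcases lt_trichotomy s 0 with h | h | h
  · simp [bdelay, h, le_of_lt h]
  · simp [bdelay, h, hT]
  · have hb : bdelay 0 s = ⊤ := by simp [bdelay, not_le.mpr h]
    simp [hb, not_lt.mpr (le_of_lt h), not_le.mpr h]

lemma mslc_cf_mono (T : ℝ) (σ ρ : ℝ≥0∞) :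
    Monotone (fun s => if s ≤ 0 then 0 else if s ≤ T then σ
      else σ + ρ * ENNReal.ofReal (s - T)) := by
  intro x z hxz
  dsimp only
  split_ifs with h1 h2 h3 h4 h5 h6 h7 <;>
    first
      | exact zero_le
      | exact le_refl _
      | exact le_add_right (le_refl σ)
      | (exfalso; linarith)
      | (gcongr <;> exact ENNReal.ofReal_le_ofReal (by linarith))

lemma mconv_bdelay (T : ℝ) (hT : 0 ≤ T) (f : ℝ → ℝ≥0∞) (hmono : Monotone f)
    (hf0 : ∀ s ≤ (0:ℝ), f s = 0) : mconv (bdelay T) f = fun t => f (t - T) := by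
  funext t
  simp only [mconv]
  by_cases ht : t < 0
  · rw [if_pos ht, hf0 _ (by linarith)]
  · rw [if_neg ht]
    push_neg at ht
    set u₀ : ℝ := max 0 (t - T) with hu₀
    have hu₀mem : u₀ ∈ Set.Icc (0:ℝ) t := ⟨le_max_left _ _, max_le ht (by linarith)⟩
    have hfu₀ : f u₀ = f (t - T) := by
      by_cases h : t - T ≤ 0
      · rw [hf0 _ h, hf0 u₀ (by simp [hu₀]; linarith)]
      · congr 1; simp [hu₀]; linarith
    apply le_antisymm
    · refine le_trans (biInf_le _ hu₀mem) ?_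
      have hle : t - u₀ ≤ T := by
        have := le_max_right 0 (t - T); rw [hu₀] at *; linarith
      have : bdelay T (t - u₀) = 0 := by simp [bdelay, hle]
      rw [this, zero_add, hfu₀]
    · refine le_iInf₂ fun u hu => ?_
      by_cases hc : t - u ≤ T
      · have : bdelay T (t - u) = 0 := by simp [bdelay, hc]
        rw [this, zero_add, ← hfu₀]
        exact hmono (max_le hu.1 (by linarith))
      · simp [bdelay, hc]

/-- The real-valued leftover function (before clamping at 0). -/
def Pfun (L b r R' D tau sig rho θ : ℝ) : ℝ → ℝ := fun u =>
  (if u - D ≤ tau then sig else sig + rho * (u - D - tau))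
    - min (b + r * (u - θ)) (L + R' * (u - θ))


set_option maxHeartbeats 1000000 in
/-- symbolic nondecreasing lower bound of the FIFO leftover, case
`θ ≥ D` and `θ ≥ D + τ − (b−L)/(R'−r)`, with `Y_b = ((b−L)/(R'−r))·r + b` and
`y = (θ + (b−L)/(R'−r) − (D+τ))·ρ + σ`. -/
theorem stmt16 (L b r R' D tau sig rho θ : ℝ)
    (hL : 0 ≤ L) (hLb : L ≤ b) (hr : 0 ≤ r) (hrR : r < R')
    (hD : 0 ≤ D) (htau : 0 ≤ tau) (hsig : 0 ≤ sig) (hrrho : r < rho) (hrhoR : rho ≤ R')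
    (hθ1 : D ≤ θ) (hθ2 : D + tau - (b - L) / (R' - r) ≤ θ) :
    ndlb (leftover
            (mconv (bdelay D) (mslcStep tau (ENNReal.ofReal sig) (ENNReal.ofReal rho)))
            (tbkt (ENNReal.ofReal b) (ENNReal.ofReal r)
              ⊓ tbkt (ENNReal.ofReal L) (ENNReal.ofReal R'))
            θ)
      = mconv (bdelay D)
          (mslcStep
              (θ - D + (b - L) / (R' - r)
                + max ((b - L) / (R' - r) * r + b
                    - ((θ + (b - L) / (R' - r) - (D + tau)) * rho + sig)) 0 / (rho - r))
              (ENNReal.ofReal (max ((θ + (b - L) / (R' - r) - (D + tau)) * rho + sig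
                  - ((b - L) / (R' - r) * r + b)) 0))
              (ENNReal.ofReal (rho - r))
            ⊓ mslcStep (θ - D) 0 ⊤) := by
  have hRr : (0:ℝ) < R' - r := by linarith
  have hρr : (0:ℝ) < rho - r := by linarith
  have hrho : (0:ℝ) ≤ rho := by linarith
  have hb : (0:ℝ) ≤ b := le_trans hL hLb
  have hR' : (0:ℝ) ≤ R' := by linarith
  set T : ℝ := (b - L) / (R' - r) with hTdef
  have hT : 0 ≤ T := div_nonneg (by linarith) hRr.le
  have hTmul : T * (R' - r) = b - L := div_mul_cancel₀ _ (ne_of_gt hRr)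
  set y : ℝ := (θ + T - (D + tau)) * rho + sig with hydef
  set Yb : ℝ := T * r + b with hYdef
  set E : ℝ := max (Yb - y) 0 with hEdef
  set σ' : ℝ := max (y - Yb) 0 with hσdef
  set τ' : ℝ := θ - D + T + E / (rho - r) with hτdef
  have hE0 : 0 ≤ E := le_max_right _ _
  have hσ'0 : 0 ≤ σ' := le_max_right _ _
  have hτ'0 : 0 ≤ τ' := by
    have : 0 ≤ E / (rho - r) := div_nonneg hE0 hρr.le
    rw [hτdef]; linarith
  have hθD : (0:ℝ) ≤ θ - D := by linarith
  have hθT : D + tau ≤ θ + T := by linarith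
  -- closed form for β
  have hβ : mconv (bdelay D) (mslcStep tau (ENNReal.ofReal sig) (ENNReal.ofReal rho))
      = fun t => (fun s => if s ≤ 0 then 0 else if s ≤ tau then ENNReal.ofReal sig
          else ENNReal.ofReal sig + ENNReal.ofReal rho * ENNReal.ofReal (s - tau)) (t - D) := by
    rw [mslcStep_eq tau htau]
    exact mconv_bdelay D hD _ (mslc_cf_mono _ _ _) (fun s hs => if_pos hs)
  -- closed form for α
  have hα : ∀ v : ℝ, 0 < v →
      (tbkt (ENNReal.ofReal b) (ENNReal.ofReal r) ⊓ tbkt (ENNReal.ofReal L) (ENNReal.ofReal R')) v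
        = ENNReal.ofReal (min (b + r * v) (L + R' * v)) := by
    intro v hv
    have hmin : ENNReal.ofReal (min (b + r * v) (L + R' * v))
        = min (ENNReal.ofReal (b + r * v)) (ENNReal.ofReal (L + R' * v)) :=
      (Monotone.map_min (fun _ _ h => ENNReal.ofReal_le_ofReal h))
    simp only [Pi.inf_apply, tbkt, if_neg (not_le.mpr hv)]
    rw [hmin, ENNReal.ofReal_add hb (mul_nonneg hr hv.le),
      ENNReal.ofReal_add hL (mul_nonneg hR' hv.le), ENNReal.ofReal_mul hr,
      ENNReal.ofReal_mul hR']
  -- the leftover in terms of Pfun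
  have hval : ∀ u, θ < u →
      leftover
        (mconv (bdelay D) (mslcStep tau (ENNReal.ofReal sig) (ENNReal.ofReal rho)))
        (tbkt (ENNReal.ofReal b) (ENNReal.ofReal r)
          ⊓ tbkt (ENNReal.ofReal L) (ENNReal.ofReal R')) θ u
        = ENNReal.ofReal (Pfun L b r R' D tau sig rho θ u) := by
    intro u hu
    have hu0 : ¬ u ≤ θ := not_le.mpr hu
    have hminn : (0:ℝ) ≤ min (b + r * (u - θ)) (L + R' * (u - θ)) :=
      le_min (by nlinarith) (by nlinarith)
    rw [leftover]
    simp only [if_neg hu0, hβ]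
    have h1 : ¬ (u - D ≤ 0) := by push_neg; linarith
    rw [if_neg h1, hα (u - θ) (by linarith), Pfun, ENNReal.ofReal_sub _ hminn]
    by_cases h2 : u - D ≤ tau
    · rw [if_pos h2, if_pos h2]
    · rw [if_neg h2, if_neg h2, ENNReal.ofReal_add hsig (mul_nonneg hrho (by push_neg at h2; linarith)),
        ENNReal.ofReal_mul hrho]
  -- closed form of Pfun above θ+T
  have key1 : ∀ x, θ + T ≤ x →
      Pfun L b r R' D tau sig rho θ x = (y - Yb) + (rho - r) * (x - (θ + T)) := by
    intro x hx
    have hmin : min (b + r * (x - θ)) (L + R' * (x - θ)) = b + r * (x - θ) := by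
      apply min_eq_left
      nlinarith [mul_nonneg (le_of_lt hRr) (by linarith : (0:ℝ) ≤ x - θ - T)]
    rw [Pfun]
    simp only [hmin]
    split_ifs with h
    · have hx1 : x = D + tau := by linarith
      rw [hydef, hYdef]
      linear_combination (-rho) * hx1
    · rw [hydef, hYdef]; ring
  -- lower bound for Pfun below θ+T
  have key2 : ∀ x, θ < x → x ≤ θ + T →
      y - Yb ≤ Pfun L b r R' D tau sig rho θ x := by
    intro x hx1 hx2
    have hmin : min (b + r * (x - θ)) (L + R' * (x - θ)) = L + R' * (x - θ) := by
      apply min_eq_right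
      nlinarith [mul_nonneg (le_of_lt hRr) (by linarith : (0:ℝ) ≤ θ + T - x)]
    rw [Pfun]
    simp only [hmin]
    rw [hydef, hYdef]
    split_ifs with h
    · nlinarith [mul_nonneg (by linarith : (0:ℝ) ≤ R' - rho) (by linarith : (0:ℝ) ≤ θ + T - x),
        mul_nonneg hrho (by linarith : (0:ℝ) ≤ D + tau - x), hTmul]
    · nlinarith [mul_nonneg (by linarith : (0:ℝ) ≤ R' - rho) (by linarith : (0:ℝ) ≤ θ + T - x), hTmul]
  -- closed form for the RHS
  have hRHS : mconv (bdelay D)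
        (mslcStep τ' (ENNReal.ofReal σ') (ENNReal.ofReal (rho - r)) ⊓ mslcStep (θ - D) 0 ⊤)
      = fun t =>
          ((fun s => if s ≤ 0 then 0 else if s ≤ τ' then ENNReal.ofReal σ'
              else ENNReal.ofReal σ' + ENNReal.ofReal (rho - r) * ENNReal.ofReal (s - τ')) ⊓
           (fun s => if s ≤ 0 then 0 else if s ≤ θ - D then 0
              else 0 + ⊤ * ENNReal.ofReal (s - (θ - D)))) (t - D) := by
    rw [mslcStep_eq τ' hτ'0, mslcStep_eq (θ - D) hθD]
    exact mconv_bdelay D hD _ ((mslc_cf_mono _ _ _).inf (mslc_cf_mono _ _ _))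
      (fun s hs => by simp [Pi.inf_apply, if_pos hs])
  rw [hRHS]
  funext t
  simp only [ndlb, Pi.inf_apply]
  by_cases ht : t ≤ θ
  · -- both sides are 0
    have hR0 : (if t - D ≤ 0 then (0:ℝ≥0∞) else if t - D ≤ θ - D then 0
        else 0 + ⊤ * ENNReal.ofReal (t - D - (θ - D))) = 0 := by
      split_ifs with h1 h2
      · rfl
      · rfl
      · exfalso; push_neg at h2; linarith
    rw [hR0]
    conv_rhs => rw [inf_of_le_right zero_le]
    apply le_antisymm
    · refine le_trans (biInf_le _ (show θ ∈ Set.Ici t from ht)) ?_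
      rw [leftover, if_pos le_rfl]
    · exact zero_le
  · push_neg at ht
    -- RHS second component is ⊤
    have h2top : (if t - D ≤ 0 then (0:ℝ≥0∞) else if t - D ≤ θ - D then 0
        else 0 + ⊤ * ENNReal.ofReal (t - D - (θ - D))) = ⊤ := by
      rw [if_neg (by push_neg; linarith), if_neg (by push_neg; linarith), zero_add,
        ENNReal.top_mul (by simp [ENNReal.ofReal_eq_zero]; linarith)]
    rw [h2top, inf_top_eq]
    set m : ℝ := max t (θ + T) with hmdef
    have hm1 : θ < m := lt_of_lt_of_le ht (le_max_left _ _)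
    have hm2 : t ≤ m := le_max_left _ _
    have hm3 : θ + T ≤ m := le_max_right _ _
    have hofmax : ∀ x : ℝ, ENNReal.ofReal (max x 0) = ENNReal.ofReal x := by
      intro x
      rcases le_total x 0 with h | h
      · rw [max_eq_right h, ENNReal.ofReal_zero, ENNReal.ofReal_of_nonpos h]
      · rw [max_eq_left h]
    -- the RHS value equals ofReal (Pfun m)
    have hcf1 : (if t - D ≤ 0 then (0:ℝ≥0∞) else if t - D ≤ τ' then ENNReal.ofReal σ'
        else ENNReal.ofReal σ' + ENNReal.ofReal (rho - r) * ENNReal.ofReal (t - D - τ'))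
        = ENNReal.ofReal (Pfun L b r R' D tau sig rho θ m) := by
      rw [if_neg (by push_neg; linarith)]
      by_cases hA : t ≤ θ + T
      · have hmm : m = θ + T := max_eq_right hA
        have := key1 (θ + T) le_rfl
        rw [hmm, this]
        rw [if_pos (by rw [hτdef]; have : 0 ≤ E / (rho - r) := div_nonneg hE0 hρr.le; linarith)]
        rw [hσdef, hofmax]
        ring_nf
      · push_neg at hA
        have hmm : m = t := max_eq_left hA.le
        rw [hmm, key1 t hA.le]
        by_cases hB : t - D ≤ τ'
        · rw [if_pos hB]
          -- here y < Yb and P t ≤ 0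
          rcases le_total (Yb - y) 0 with hyY | hyY
          · exfalso
            have hE' : E = 0 := max_eq_right hyY
            rw [hτdef, hE'] at hB
            simp at hB
            linarith
          · have hE' : E = Yb - y := max_eq_left hyY
            have hσ'' : σ' = 0 := max_eq_right (by linarith)
            have hPt : (y - Yb) + (rho - r) * (t - (θ + T)) ≤ 0 := by
              rw [hτdef, hE'] at hB
              have h3 : t - (θ + T) ≤ (Yb - y) / (rho - r) := by linarith
              have h4 : (rho - r) * (t - (θ + T)) ≤ (rho - r) * ((Yb - y) / (rho - r)) :=
                mul_le_mul_of_nonneg_left h3 hρr.le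
              rw [mul_div_cancel₀ _ (ne_of_gt hρr)] at h4
              linarith
            rw [hσ'', ENNReal.ofReal_zero, ENNReal.ofReal_of_nonpos hPt]
        · push_neg at hB
          rw [if_neg (not_le.mpr hB)]
          rw [← ENNReal.ofReal_mul hρr.le,
            ← ENNReal.ofReal_add hσ'0 (mul_nonneg hρr.le (by linarith))]
          congr 1
          have hdiv : E / (rho - r) * (rho - r) = E := div_mul_cancel₀ _ (ne_of_gt hρr)
          have h1 : σ' - E = y - Yb := by
            rcases le_total y Yb with h | h
            · rw [hσdef, hEdef, max_eq_right (by linarith), max_eq_left (by linarith)]; ring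
            · rw [hσdef, hEdef, max_eq_left (by linarith), max_eq_right (by linarith)]; ring
          rw [hτdef]
          nlinarith [hdiv, h1]
    rw [hcf1]
    apply le_antisymm
    · exact le_trans (biInf_le _ (show m ∈ Set.Ici t from hm2)) (le_of_eq (hval m hm1))
    · refine le_iInf₂ fun u hu => ?_
      have hu' : θ < u := lt_of_lt_of_le ht hu
      rw [hval u hu']
      apply ENNReal.ofReal_le_ofReal
      by_cases hc : u ≤ θ + T
      · have hmm : m = θ + T := max_eq_right (le_trans hu hc)
        rw [hmm, key1 (θ + T) le_rfl]
        have := key2 u hu' hc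
        simp only [sub_self, mul_zero, add_zero]
        exact this
      · push_neg at hc
        rw [key1 m hm3, key1 u hc.le]
        have hmu : m ≤ u := max_le hu hc.le
        nlinarith [mul_nonneg hρr.le (by linarith : (0:ℝ) ≤ u - m)]
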